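/- Let n ≥ 1 and let ε₁,…,ε_n be the standard basis of ℚ^n. Let C = {ξ ∈ ℚ^n : ξ₁ ≥ ξ₂ ≥ ⋯ ≥ ξ_n} and Φ = conv(±ε₁,…,±ε_n) = {ξ : Σ|ξ_i| ≤ 1} (rational convex hull). Let D be the rational convex hull of the points 0, ε₁, (ε₁+ε₂)/2, …, (ε₁+⋯+ε_n)/n, −ε_n, (−ε_n−ε_{n−1})/2, …, (−ε_n−⋯−ε₁)/n. Then Φ ∩ C ⊆ D. -/

import Mathlib

private lemma tele6 (f : ℕ → ℚ) (j : ℕ) (m : ℕ) :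
    ∑ i ∈ Finset.range m, (if j ≤ i then f i - f (i + 1) else 0)
      = if j ≤ m then f j - f m else 0 := by
  induction m with
  | zero =>
    simp only [Finset.range_zero, Finset.sum_empty]
    split
    · next h => interval_cases j; ring
    · rfl
  | succ m ih =>
    rw [Finset.sum_range_succ, ih]
    by_cases h : j ≤ m
    · rw [if_pos h, if_pos h, if_pos (by omega)]; ring
    · rw [if_neg h, if_neg h]
      by_cases h2 : j ≤ m + 1
      · have : j = m + 1 := by omega
        subst this
        rw [if_pos le_rfl]; ring
      · rw [if_neg h2]; ring

private lemma abel6 (f : ℕ → ℚ) (m : ℕ) :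
    ∑ i ∈ Finset.range m, ((i : ℚ) + 1) * (f i - f (i + 1))
      = (∑ i ∈ Finset.range m, f i) - (m : ℚ) * f m := by
  induction m with
  | zero => simp
  | succ m ih =>
    rw [Finset.sum_range_succ, ih, Finset.sum_range_succ]
    push_cast; ring

theorem stmt6 (n : ℕ) (hn : 1 ≤ n) (ξ : Fin n → ℚ)
    (hmono : ∀ i j : Fin n, i ≤ j → ξ j ≤ ξ i)
    (hΦ : ∑ i : Fin n, |ξ i| ≤ 1) :
    ξ ∈ convexHull ℚ (insert (0 : Fin n → ℚ)
      (Set.range (fun i : Fin n => fun j : Fin n =>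
          if j ≤ i then (1 : ℚ) / ((i : ℕ) + 1) else 0) ∪
       Set.range (fun i : Fin n => fun j : Fin n =>
          if n ≤ (i : ℕ) + (j : ℕ) + 1 then -(1 : ℚ) / ((i : ℕ) + 1) else 0))) := by
  classical
  set A : ℕ → ℚ := fun k => if h : k < n then max (ξ ⟨k, h⟩) 0 else 0 with hAdef
  set B : ℕ → ℚ := fun k =>
    if h : k < n then max (-ξ ⟨n - 1 - k, by omega⟩) 0 else 0 with hBdef
  have hAn : A n = 0 := by simp [hAdef]
  have hBn : B n = 0 := by simp [hBdef]
  have hAmono : ∀ k, A (k + 1) ≤ A k := by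
    intro k
    by_cases h1 : k + 1 < n
    · have h0 : k < n := by omega
      simp only [hAdef, dif_pos h1, dif_pos h0]
      exact max_le_max (hmono ⟨k, h0⟩ ⟨k + 1, h1⟩ (by simp [Fin.le_def])) le_rfl
    · by_cases h0 : k < n
      · simp only [hAdef, dif_neg h1, dif_pos h0]
        exact le_max_right _ _
      · simp only [hAdef, dif_neg h1, dif_neg h0]; exact le_rfl
  have hBmono : ∀ k, B (k + 1) ≤ B k := by
    intro k
    by_cases h1 : k + 1 < n
    · have h0 : k < n := by omega
      simp only [hBdef, dif_pos h1, dif_pos h0]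
      refine max_le_max (neg_le_neg ?_) le_rfl
      exact hmono ⟨n - 1 - (k + 1), by omega⟩ ⟨n - 1 - k, by omega⟩ (by simp [Fin.le_def]; omega)
    · by_cases h0 : k < n
      · simp only [hBdef, dif_neg h1, dif_pos h0]
        exact le_max_right _ _
      · simp only [hBdef, dif_neg h1, dif_neg h0]; exact le_rfl
  have hAj : ∀ j : Fin n, A (j : ℕ) = max (ξ j) 0 := by
    intro j; simp [hAdef, j.isLt]
  have hBj : ∀ j : Fin n, B (n - 1 - (j : ℕ)) = max (-ξ j) 0 := by
    intro j
    have hlt : n - 1 - (j : ℕ) < n := by omega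
    simp only [hBdef, dif_pos hlt]
    have he : (⟨n - 1 - (n - 1 - (j : ℕ)), by omega⟩ : Fin n) = j := by
      apply Fin.ext
      simp only [Fin.val_mk]
      omega
    rw [he]
  set c : Fin n → ℚ := fun i => (((i : ℕ) : ℚ) + 1) * (A i - A (i + 1)) with hcdef
  set d : Fin n → ℚ := fun i => (((i : ℕ) : ℚ) + 1) * (B i - B (i + 1)) with hddef
  have hc0 : ∀ i, 0 ≤ c i := fun i =>
    mul_nonneg (by positivity) (sub_nonneg.2 (hAmono i))
  have hd0 : ∀ i, 0 ≤ d i := fun i =>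
    mul_nonneg (by positivity) (sub_nonneg.2 (hBmono i))
  have hsumc : ∑ i : Fin n, c i = ∑ j : Fin n, max (ξ j) 0 := by
    simp only [hcdef]
    rw [Fin.sum_univ_eq_sum_range (fun k => ((k : ℚ) + 1) * (A k - A (k + 1))) n,
      abel6 A n, hAn, mul_zero, sub_zero, ← Fin.sum_univ_eq_sum_range A n]
    exact Finset.sum_congr rfl fun j _ => hAj j
  have hsumd : ∑ i : Fin n, d i = ∑ j : Fin n, max (-ξ j) 0 := by
    simp only [hddef]
    rw [Fin.sum_univ_eq_sum_range (fun k => ((k : ℚ) + 1) * (B k - B (k + 1))) n,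
      abel6 B n, hBn, mul_zero, sub_zero, ← Fin.sum_univ_eq_sum_range B n]
    refine Fintype.sum_bijective Fin.rev Fin.rev_involutive.bijective _ _ (fun k => ?_)
    have : ((Fin.rev k : Fin n) : ℕ) = n - 1 - (k : ℕ) := by
      simp [Fin.val_rev]; omega
    rw [← this] at *
    have := hBj (Fin.rev k)
    rw [show n - 1 - ((Fin.rev k : Fin n) : ℕ) = (k : ℕ) by simp [Fin.val_rev]; omega] at this
    exact this
  have habs : ∑ i : Fin n, c i + ∑ i : Fin n, d i = ∑ i : Fin n, |ξ i| := by
    rw [hsumc, hsumd, ← Finset.sum_add_distrib]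
    refine Finset.sum_congr rfl fun j _ => ?_
    rcases le_total 0 (ξ j) with h | h
    · rw [abs_of_nonneg h, max_eq_left h, max_eq_right (by linarith)]; ring
    · rw [abs_of_nonpos h, max_eq_right h, max_eq_left (by linarith)]; ring
  set w0 : ℚ := 1 - ∑ i : Fin n, c i - ∑ i : Fin n, d i with hw0def
  have hw00 : 0 ≤ w0 := by rw [hw0def]; linarith [habs ▸ hΦ]
  -- the convex combination
  set V : Fin n → (Fin n → ℚ) := fun i => fun j : Fin n =>
    if j ≤ i then (1 : ℚ) / ((i : ℕ) + 1) else 0 with hVdef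
  set Wp : Fin n → (Fin n → ℚ) := fun i => fun j : Fin n =>
    if n ≤ (i : ℕ) + (j : ℕ) + 1 then -(1 : ℚ) / ((i : ℕ) + 1) else 0 with hWdef
  set ι := Option (Fin n ⊕ Fin n) with hιdef
  set W : ι → ℚ := fun x => x.elim w0 (Sum.elim c d) with hWW
  set P : ι → (Fin n → ℚ) := fun x => x.elim 0 (Sum.elim V Wp) with hPP
  have key : ∑ x : ι, W x • P x = ξ := by
    funext j
    have hjn : (j : ℕ) < n := j.isLt
    rw [Finset.sum_apply]
    rw [Fintype.sum_option]
    simp only [hWW, hPP, Option.elim, Pi.smul_apply, smul_eq_mul]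
    rw [Fintype.sum_sum_type]
    have hpos : ∑ i : Fin n, Sum.elim c d (Sum.inl i) * Sum.elim V Wp (Sum.inl i) j
        = max (ξ j) 0 := by
      simp only [Sum.elim_inl]
      have step : ∀ i : Fin n, c i * V i j = if (j : ℕ) ≤ (i : ℕ) then A i - A (i + 1) else 0 := by
        intro i
        simp only [hVdef, hcdef, Fin.le_def]
        by_cases h : (j : ℕ) ≤ (i : ℕ)
        · rw [if_pos h, if_pos h]
          have : (((i : ℕ) : ℚ) + 1) ≠ 0 := by positivity
          field_simp
        · rw [if_neg h, if_neg h, mul_zero]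
      simp only [step]
      rw [Fin.sum_univ_eq_sum_range (fun k => if (j : ℕ) ≤ k then A k - A (k + 1) else 0) n,
        tele6 A (j : ℕ) n, if_pos (le_of_lt hjn), hAn, sub_zero, hAj]
    have hneg : ∑ i : Fin n, Sum.elim c d (Sum.inr i) * Sum.elim V Wp (Sum.inr i) j
        = -max (-ξ j) 0 := by
      simp only [Sum.elim_inr]
      have step : ∀ i : Fin n, d i * Wp i j =
          -(if n - 1 - (j : ℕ) ≤ (i : ℕ) then B i - B (i + 1) else 0) := by
        intro i
        simp only [hWdef, hddef]
        by_cases h : n ≤ (i : ℕ) + (j : ℕ) + 1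
        · rw [if_pos h, if_pos (by omega)]
          have : (((i : ℕ) : ℚ) + 1) ≠ 0 := by positivity
          field_simp
        · rw [if_neg h, if_neg (by omega), mul_zero, neg_zero]
      simp only [step]
      rw [Finset.sum_neg_distrib, neg_inj,
        Fin.sum_univ_eq_sum_range (fun k => if n - 1 - (j : ℕ) ≤ k then B k - B (k + 1) else 0) n,
        tele6 B (n - 1 - (j : ℕ)) n, if_pos (by omega), hBn, sub_zero, hBj]
    rw [hpos, hneg]
    simp only [Pi.zero_apply, mul_zero]
    rcases le_total 0 (ξ j) with h | h
    · rw [max_eq_left h, max_eq_right (by linarith)]; ring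
    · rw [max_eq_right h, max_eq_left (by linarith)]; ring
  rw [← key]
  refine (convex_convexHull ℚ _).sum_mem (fun x _ => ?_) ?_ (fun x _ => ?_)
  · rcases x with _ | (i | i)
    · exact hw00
    · exact hc0 i
    · exact hd0 i
  · rw [Fintype.sum_option, Fintype.sum_sum_type]
    simp only [hWW, Option.elim, Sum.elim_inl, Sum.elim_inr]
    rw [hw0def]; ring
  · apply subset_convexHull
    rcases x with _ | (i | i)
    · exact Set.mem_insert _ _
    · exact Set.mem_insert_of_mem _ (Or.inl ⟨i, rfl⟩)
    · exact Set.mem_insert_of_mem _ (Or.inr ⟨i, rfl⟩)
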